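/- Let S ⊆ ℝ^d be measurable and let p⁽¹⁾, p⁽²⁾ : ℝ^d → [0, ∞) be probability density functions with respect to Lebesgue measure that vanish outside S and satisfy p⁽¹⁾(x) ≥ p̲ and p⁽²⁾(x) ≥ p̲ for all x ∈ S, where p̲ > 0. Assume sup_{x ∈ ℝ^d} |p⁽¹⁾(x) − p⁽²⁾(x)| ≤ δ. Let κ be a Markov kernel from ℝ^d to a measurable space E and let ℓ : ℝ^d × E → [0, ∞) be measurable; define the risks R⁽ʲ⁾ := ∫_{ℝ^d} (∫_E ℓ(x, c) κ(x, dc)) p⁽ʲ⁾(x) dx for j = 1, 2. Then R⁽²⁾ ≤ R⁽¹⁾ · exp(δ/p̲) and R⁽¹⁾ ≤ R⁽²⁾ · exp(δ/p̲). -/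
import Mathlib


open MeasureTheory ProbabilityTheory Real
open scoped ENNReal

/-- Risks under distribution shift: if `p⁽¹⁾, p⁽²⁾` are probability densities supported on `S`,
bounded below by `p̲ > 0` on `S`, with `sup |p⁽¹⁾ − p⁽²⁾| ≤ δ`, then the risks
`R⁽ʲ⁾ = ∫ (∫ ℓ(x,c) κ(x,dc)) p⁽ʲ⁾(x) dx` satisfy `R⁽²⁾ ≤ R⁽¹⁾ exp(δ/p̲)` and
`R⁽¹⁾ ≤ R⁽²⁾ exp(δ/p̲)`. -/
theorem risk_bound_under_distribution_shift
    (d : ℕ) (S : Set (EuclideanSpace ℝ (Fin d))) (hS : MeasurableSet S)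
    (p₁ p₂ : EuclideanSpace ℝ (Fin d) → ℝ)
    (hp₁meas : Measurable p₁) (hp₂meas : Measurable p₂)
    (hp₁nonneg : ∀ x, 0 ≤ p₁ x) (hp₂nonneg : ∀ x, 0 ≤ p₂ x)
    (hp₁prob : ∫⁻ x, ENNReal.ofReal (p₁ x) = 1)
    (hp₂prob : ∫⁻ x, ENNReal.ofReal (p₂ x) = 1)
    (hp₁supp : ∀ x ∉ S, p₁ x = 0) (hp₂supp : ∀ x ∉ S, p₂ x = 0)
    (pl : ℝ) (hpl : 0 < pl)
    (hp₁lb : ∀ x ∈ S, pl ≤ p₁ x) (hp₂lb : ∀ x ∈ S, pl ≤ p₂ x)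
    (δ : ℝ) (hδ : ∀ x, |p₁ x - p₂ x| ≤ δ)
    (E : Type*) [MeasurableSpace E]
    (κ : Kernel (EuclideanSpace ℝ (Fin d)) E) [IsMarkovKernel κ]
    (ℓ : EuclideanSpace ℝ (Fin d) × E → ℝ)
    (hℓmeas : Measurable ℓ) (hℓnonneg : ∀ z, 0 ≤ ℓ z)
    (R₁ R₂ : ℝ≥0∞)
    (hR₁ : R₁ = ∫⁻ x, (∫⁻ c, ENNReal.ofReal (ℓ (x, c)) ∂(κ x)) * ENNReal.ofReal (p₁ x))
    (hR₂ : R₂ = ∫⁻ x, (∫⁻ c, ENNReal.ofReal (ℓ (x, c)) ∂(κ x)) * ENNReal.ofReal (p₂ x)) :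
    R₂ ≤ R₁ * ENNReal.ofReal (Real.exp (δ / pl)) ∧
      R₁ ≤ R₂ * ENNReal.ofReal (Real.exp (δ / pl)) := by
  have hδ0 : 0 ≤ δ := le_trans (abs_nonneg _) (hδ 0)
  -- pointwise bound, symmetric in the two densities
  have key : ∀ q r : EuclideanSpace ℝ (Fin d) → ℝ,
      (∀ x, 0 ≤ q x) → (∀ x ∉ S, r x = 0) → (∀ x ∈ S, pl ≤ q x) →
      (∀ x, |q x - r x| ≤ δ) → ∀ x, r x ≤ q x * Real.exp (δ / pl) := by
    intro q r hq hr hlb habs x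
    by_cases hx : x ∈ S
    · have h1 : r x ≤ q x + δ := by
        have := (abs_le.mp (habs x)).1
        linarith
      have h2 : δ ≤ q x * (δ / pl) := by
        have h := mul_le_mul_of_nonneg_right (hlb x hx)
          (by positivity : (0:ℝ) ≤ δ / pl)
        have hpl' : pl * (δ / pl) = δ := by field_simp
        linarith
      have h3 : q x * (1 + δ / pl) ≤ q x * Real.exp (δ / pl) := by
        apply mul_le_mul_of_nonneg_left _ (hq x)
        have := Real.add_one_le_exp (δ / pl)
        linarith
      nlinarith
    · rw [hr x hx]; exact mul_nonneg (hq x) (Real.exp_pos _).le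
  set g : EuclideanSpace ℝ (Fin d) → ℝ≥0∞ :=
    fun x => ∫⁻ c, ENNReal.ofReal (ℓ (x, c)) ∂(κ x) with hg
  have hgmeas : Measurable g := by
    apply Measurable.lintegral_kernel_prod_right
    exact hℓmeas.ennreal_ofReal
  have main : ∀ q r : EuclideanSpace ℝ (Fin d) → ℝ, Measurable q →
      (∀ x, r x ≤ q x * Real.exp (δ / pl)) →
      (∫⁻ x, g x * ENNReal.ofReal (r x)) ≤
        (∫⁻ x, g x * ENNReal.ofReal (q x)) * ENNReal.ofReal (Real.exp (δ / pl)) := by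
    intro q r hqm hle
    calc (∫⁻ x, g x * ENNReal.ofReal (r x))
        ≤ ∫⁻ x, (g x * ENNReal.ofReal (q x)) * ENNReal.ofReal (Real.exp (δ / pl)) := by
          apply lintegral_mono
          intro x
          dsimp only
          rw [mul_assoc]
          exact mul_le_mul_right
            ((ENNReal.ofReal_le_ofReal (hle x)).trans (ENNReal.ofReal_mul' (Real.exp_pos _).le).le) _
      _ = (∫⁻ x, g x * ENNReal.ofReal (q x)) * ENNReal.ofReal (Real.exp (δ / pl)) :=
          lintegral_mul_const _ (hgmeas.mul hqm.ennreal_ofReal)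
  rw [hR₁, hR₂]
  exact ⟨main p₁ p₂ hp₁meas (key p₁ p₂ hp₁nonneg hp₂supp hp₁lb hδ),
    main p₂ p₁ hp₂meas (key p₂ p₁ hp₂nonneg hp₁supp hp₂lb
      (fun x => by rw [abs_sub_comm]; exact hδ x))⟩
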